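/- For every m ≥ 1 and every 0 ≤ i ≤ m, the following identity holds in ℤ[x_1,…,x_m]: B_i = Σ_{k=0}^{i} γ_{i,k}^m · L_k, where γ_{i,k}^m = Σ_{j=k}^{i} (−1)^{j−k} · mbinom(m, j−k) · binom(m−j, i−j), B_i = e_i(1+x_1,…,1+x_m) and L_k = e_k(1,…,1,x_1,…,x_m). -/

import Mathlib

open MvPolynomial

/-- `P_i = e_i(x_1, …, x_m)`, the `i`-th elementary symmetric polynomial in the variables. -/
noncomputable def Psym (m i : ℕ) : MvPolynomial (Fin m) ℤ :=
  (((Finset.univ : Finset (Fin m)).val.map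
    fun j => (X j : MvPolynomial (Fin m) ℤ)).esymm i)

/-- `L_i = e_i(1, …, 1, x_1, …, x_m)`, the `i`-th elementary symmetric polynomial in `2m`
arguments, of which `m` are equal to `1`. -/
noncomputable def Lsym (m i : ℕ) : MvPolynomial (Fin m) ℤ :=
  ((Multiset.replicate m (1 : MvPolynomial (Fin m) ℤ) +
    (Finset.univ : Finset (Fin m)).val.map
      fun j => (X j : MvPolynomial (Fin m) ℤ)).esymm i)

/-- `B_i = e_i(1 + x_1, …, 1 + x_m)`. -/
noncomputable def Bsym (m i : ℕ) : MvPolynomial (Fin m) ℤ :=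
  (((Finset.univ : Finset (Fin m)).val.map
    fun j => (1 + X j : MvPolynomial (Fin m) ℤ)).esymm i)

/-- `γ_{i,k}^m = Σ_{j=k}^{i} (-1)^{j-k} · mbinom(m, j-k) · binom(m-j, i-j)`, where
`mbinom(n,k) = binom(n+k-1, k)`. -/
def gammaCoef (m i k : ℕ) : ℤ :=
  ∑ j ∈ Finset.Icc k i,
    (-1 : ℤ) ^ (j - k) * ((m + (j - k) - 1).choose (j - k) : ℤ) *
      ((m - j).choose (i - j) : ℤ)

open PowerSeries Finset in
lemma Tlem (m : ℕ) (hm : 1 ≤ m) (n : ℕ) :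
    ∑ d ∈ Finset.range (n+1), (-1:ℤ)^d * ((m + d - 1).choose d : ℤ) * (m.choose (n-d) : ℤ)
      = if n = 0 then 1 else 0 := by
  obtain ⟨d0, rfl⟩ : ∃ d0, m = d0 + 1 := ⟨m - 1, by omega⟩
  have h1 : (mk fun k ↦ ((d0 + k).choose d0 : ℤ) : ℤ⟦X⟧) * ((1 - PowerSeries.X) ^ (d0 + 1)) = 1 :=
    mk_add_choose_mul_one_sub_pow_eq_one ℤ d0
  have h2 := congrArg (rescale (-1 : ℤ)) h1
  rw [map_mul, map_pow, map_sub, map_one, rescale_neg_one_X, sub_neg_eq_add, rescale_mk] at h2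
  have h3 := congrArg (PowerSeries.coeff (R := ℤ) n) h2
  rw [PowerSeries.coeff_mul, PowerSeries.coeff_one,
    Finset.Nat.sum_antidiagonal_eq_sum_range_succ_mk] at h3
  have hX : ((1 : ℤ⟦X⟧) + PowerSeries.X) = ((1 + Polynomial.X : Polynomial ℤ) : ℤ⟦X⟧) := by
    push_cast; ring
  rw [← h3]
  refine Finset.sum_congr rfl fun d hd => ?_
  rw [PowerSeries.coeff_mk, hX, ← Polynomial.coe_pow, Polynomial.coeff_coe,
    Polynomial.coeff_one_add_X_pow,
    show d0 + 1 + d - 1 = d0 + d by omega,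
    show (d0 + d).choose d = (d0 + d).choose ((d0 + d) - d0) by congr 1; omega,
    Nat.choose_symm (by omega)]

lemma keyC (m i l : ℕ) (hm : 1 ≤ m) (hi : i ≤ m) (hl : l ≤ m) :
    ∑ k ∈ Finset.range (i+1), gammaCoef m i k * (m.choose (m - k + l) : ℤ)
      = ((m-l).choose (m-i) : ℤ) := by
  set F : ℕ → ℕ → ℤ := fun k j =>
    (-1 : ℤ) ^ (j - k) * ((m + (j - k) - 1).choose (j - k) : ℤ) *
      ((m - j).choose (i - j) : ℤ) * (m.choose (m - k + l) : ℤ) with hF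
  have step1 : ∑ k ∈ Finset.range (i+1), gammaCoef m i k * (m.choose (m - k + l) : ℤ)
      = ∑ k ∈ Finset.range (i+1), ∑ j ∈ Finset.Icc k i, F k j := by
    refine Finset.sum_congr rfl fun k _ => ?_
    rw [gammaCoef, Finset.sum_mul]
  have step2 : ∑ k ∈ Finset.range (i+1), ∑ j ∈ Finset.Icc k i, F k j
      = ∑ j ∈ Finset.range (i+1), ∑ k ∈ Finset.range (j+1), F k j := by
    have e1 : ∀ k ∈ Finset.range (i+1), ∑ j ∈ Finset.Icc k i, F k j
        = ∑ j ∈ Finset.range (i+1), if k ≤ j then F k j else 0 := by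
      intro k _
      rw [Finset.sum_ite, Finset.sum_const_zero, add_zero]
      congr 1
      ext j; simp [Nat.lt_succ_iff]; omega
    rw [Finset.sum_congr rfl e1, Finset.sum_comm]
    refine Finset.sum_congr rfl fun j hj => ?_
    rw [Finset.sum_ite, Finset.sum_const_zero, add_zero]
    congr 1
    ext k; simp [Nat.lt_succ_iff] at *; omega
  have inner : ∀ j ∈ Finset.range (i+1),
      ∑ k ∈ Finset.range (j+1), F k j
        = (if j = l then 1 else 0) * ((m - j).choose (i - j) : ℤ) := by
    intro j hj
    rw [Finset.mem_range, Nat.lt_succ_iff] at hj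
    have refl1 : ∑ k ∈ Finset.range (j+1), F k j
        = ∑ d ∈ Finset.range (j+1), F (j - d) j := by
      rw [← Finset.sum_range_reflect]
      simp only [Nat.add_sub_cancel]
    rw [refl1]
    have term : ∀ d ∈ Finset.range (j+1), F (j - d) j
        = ((-1:ℤ)^d * ((m + d - 1).choose d : ℤ) * (m.choose (m - j + d + l) : ℤ))
          * ((m - j).choose (i - j) : ℤ) := by
      intro d hd
      rw [Finset.mem_range, Nat.lt_succ_iff] at hd
      have h1 : j - (j - d) = d := by omega
      have h2 : m - (j - d) + l = m - j + d + l := by omega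
      simp only [hF, h1, h2]
      ring
    rw [Finset.sum_congr rfl term, ← Finset.sum_mul]
    congr 1
    rcases lt_or_ge j l with hjl | hlj
    · rw [if_neg (by omega)]
      refine Finset.sum_eq_zero fun d hd => ?_
      rw [show m.choose (m - j + d + l) = 0 from Nat.choose_eq_zero_of_lt (by omega),
        Nat.cast_zero, mul_zero]
    · have hz : ∀ d ∈ Finset.range (j+1), d ∉ Finset.range ((j-l)+1) →
          (-1:ℤ)^d * ((m + d - 1).choose d : ℤ) * (m.choose (m - j + d + l) : ℤ) = 0 := by
        intro d hd hd'
        rw [Finset.mem_range, Nat.lt_succ_iff] at hd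
        rw [Finset.mem_range, Nat.lt_succ_iff] at hd'
        rw [show m.choose (m - j + d + l) = 0 from Nat.choose_eq_zero_of_lt (by omega),
          Nat.cast_zero, mul_zero]
      rw [← Finset.sum_subset (Finset.range_subset_range.2 (by omega)) hz]
      have e2 : ∀ d ∈ Finset.range ((j-l)+1),
          (-1:ℤ)^d * ((m + d - 1).choose d : ℤ) * (m.choose (m - j + d + l) : ℤ)
          = (-1:ℤ)^d * ((m + d - 1).choose d : ℤ) * (m.choose ((j - l) - d) : ℤ) := by
        intro d hd
        rw [Finset.mem_range, Nat.lt_succ_iff] at hd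
        rw [show m - j + d + l = m - ((j - l) - d) by omega,
          Nat.choose_symm (show (j - l) - d ≤ m by omega)]
      rw [Finset.sum_congr rfl e2, Tlem m hm]
      by_cases h : j = l
      · simp [h]
      · rw [if_neg (by omega), if_neg h]
  rw [step1, step2, Finset.sum_congr rfl inner]
  simp only [ite_mul, one_mul, zero_mul]
  rw [Finset.sum_ite_eq' (Finset.range (i+1)) l]
  by_cases h : l ≤ i
  · rw [if_pos (Finset.mem_range.2 (by omega))]
    rw [show m - i = (m - l) - (i - l) by omega, Nat.choose_symm (show i - l ≤ m - l by omega)]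
  · rw [if_neg (by simp [Nat.lt_succ_iff]; omega),
      show (m-l).choose (m-i) = 0 from Nat.choose_eq_zero_of_lt (by omega), Nat.cast_zero]

namespace Aux

variable (m : ℕ)

noncomputable abbrev sM : Multiset (MvPolynomial (Fin m) ℤ) :=
  (Finset.univ : Finset (Fin m)).val.map fun j => (X j : MvPolynomial (Fin m) ℤ)

lemma card_sM : Multiset.card (sM m) = m := by simp

noncomputable abbrev Pgen : Polynomial (MvPolynomial (Fin m) ℤ) :=
  ((sM m).map fun r => Polynomial.X + Polynomial.C r).prod

lemma Pgen_eq : Pgen m = ∑ j ∈ Finset.range (m+1),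
    Polynomial.C (Psym m j) * Polynomial.X ^ (m - j) := by
  rw [Pgen, Multiset.prod_X_add_C_eq_sum_esymm, card_sM]
  rfl

lemma Bsym_eq (i : ℕ) (hi : i ≤ m) :
    Bsym m i = ∑ k ∈ Finset.range (m+1),
      Psym m k * (((m - k).choose (m - i) : ℕ) : MvPolynomial (Fin m) ℤ) := by
  classical
  have hmap : ((Finset.univ : Finset (Fin m)).val.map
      fun j => (1 + X j : MvPolynomial (Fin m) ℤ))
      = (sM m).map (fun r => 1 + r) := by
    rw [Multiset.map_map]; rfl
  have hcard : Multiset.card ((sM m).map (fun r => 1 + r)) = m := by simp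
  have hcoeff := Multiset.prod_X_add_C_coeff ((sM m).map (fun r => 1 + r))
    (k := m - i) (by rw [hcard]; omega)
  rw [hcard, Nat.sub_sub_self hi] at hcoeff
  have hQ : (((sM m).map (fun r => 1 + r)).map fun r => Polynomial.X + Polynomial.C r).prod
      = Polynomial.aeval (Polynomial.X + 1 : Polynomial (MvPolynomial (Fin m) ℤ)) (Pgen m) := by
    rw [Multiset.map_map]
    rw [show ((fun r => Polynomial.X + Polynomial.C r) ∘ (fun r : MvPolynomial (Fin m) ℤ => 1 + r))
        = (fun r => (Polynomial.aeval (Polynomial.X + 1 : Polynomial (MvPolynomial (Fin m) ℤ)))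
            (Polynomial.X + Polynomial.C r)) from ?_]
    · rw [Pgen, map_multiset_prod]
      simp only [Multiset.map_map]
      rfl
    · funext r
      simp only [Function.comp_apply, map_add, Polynomial.aeval_X, Polynomial.aeval_C]
      rw [Polynomial.C_1, Polynomial.algebraMap_eq]
      ring
  have : Bsym m i = (Polynomial.aeval
      (Polynomial.X + 1 : Polynomial (MvPolynomial (Fin m) ℤ)) (Pgen m)).coeff (m - i) := by
    rw [← hQ, hcoeff, Bsym, hmap]
  rw [this, Pgen_eq, map_sum, Polynomial.finset_sum_coeff]
  refine Finset.sum_congr rfl fun k hk => ?_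
  rw [map_mul, map_pow, Polynomial.aeval_X,
    show (Polynomial.aeval (Polynomial.X + 1 : Polynomial (MvPolynomial (Fin m) ℤ)))
      (Polynomial.C (Psym m k)) = Polynomial.C (Psym m k) from by
        rw [Polynomial.aeval_C]; rfl,
    Polynomial.coeff_C_mul, Polynomial.coeff_X_add_one_pow]

lemma Lsym_eq (k : ℕ) (hk : k ≤ m) :
    Lsym m k = ∑ j ∈ Finset.range (m+1),
      Psym m j * ((m.choose (m - k + j) : ℕ) : MvPolynomial (Fin m) ℤ) := by
  classical
  set t : Multiset (MvPolynomial (Fin m) ℤ) :=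
    Multiset.replicate m (1 : MvPolynomial (Fin m) ℤ) + sM m with ht
  have hcard : Multiset.card t = m + m := by simp [ht]
  have hcoeff := Multiset.prod_X_add_C_coeff t (k := m + m - k) (by rw [hcard]; omega)
  rw [hcard, show m + m - (m + m - k) = k by omega] at hcoeff
  have hQ : (t.map fun r => Polynomial.X + Polynomial.C r).prod
      = (Polynomial.X + 1) ^ m * Pgen m := by
    rw [ht, Multiset.map_add, Multiset.prod_add, Multiset.map_replicate,
      Multiset.prod_replicate, map_one]
  have : Lsym m k = ((Polynomial.X + 1) ^ m * Pgen m).coeff (m + m - k) := by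
    rw [← hQ, hcoeff]; rfl
  rw [this, Pgen_eq, Finset.mul_sum, Polynomial.finset_sum_coeff]
  refine Finset.sum_congr rfl fun j hj => ?_
  rw [Finset.mem_range, Nat.lt_succ_iff] at hj
  rw [mul_left_comm, Polynomial.coeff_C_mul, Polynomial.coeff_mul_X_pow',
    if_pos (by omega : m - j ≤ m + m - k),
    show m + m - k - (m - j) = m - k + j by omega,
    Polynomial.coeff_X_add_one_pow]

end Aux

/-- For `m ≥ 1` and `0 ≤ i ≤ m`: `B_i = Σ_{k=0}^{i} γ_{i,k}^m · L_k` in `ℤ[x_1,…,x_m]`. -/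
theorem stmt9 (m : ℕ) (hm : 1 ≤ m) (i : ℕ) (hi : i ≤ m) :
    Bsym m i = ∑ k ∈ Finset.range (i + 1),
      (gammaCoef m i k : MvPolynomial (Fin m) ℤ) * Lsym m k := by
  rw [Aux.Bsym_eq m i hi]
  have hL : ∀ k ∈ Finset.range (i+1),
      (gammaCoef m i k : MvPolynomial (Fin m) ℤ) * Lsym m k
      = ∑ j ∈ Finset.range (m+1),
          Psym m j * ((gammaCoef m i k : MvPolynomial (Fin m) ℤ) *
            ((m.choose (m - k + j) : ℕ) : MvPolynomial (Fin m) ℤ)) := by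
    intro k hk
    rw [Finset.mem_range, Nat.lt_succ_iff] at hk
    rw [Aux.Lsym_eq m k (le_trans hk hi), Finset.mul_sum]
    exact Finset.sum_congr rfl fun j _ => by ring
  rw [Finset.sum_congr rfl hL, Finset.sum_comm]
  refine Finset.sum_congr rfl fun j hj => ?_
  rw [Finset.mem_range, Nat.lt_succ_iff] at hj
  rw [← Finset.mul_sum]
  congr 1
  have hkey := keyC m i j hm hi hj
  calc (((m - j).choose (m - i) : ℕ) : MvPolynomial (Fin m) ℤ)
      = ((((m - j).choose (m - i) : ℤ)) : MvPolynomial (Fin m) ℤ) := by push_cast; ring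
    _ = ((∑ k ∈ Finset.range (i+1), gammaCoef m i k * (m.choose (m - k + j) : ℤ) : ℤ) :
          MvPolynomial (Fin m) ℤ) := by rw [hkey]
    _ = ∑ k ∈ Finset.range (i+1), (gammaCoef m i k : MvPolynomial (Fin m) ℤ) *
          ((m.choose (m - k + j) : ℕ) : MvPolynomial (Fin m) ℤ) := by push_cast; ring
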